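/- arXiv:2402.08857 — 2 statements merged into one kernel-verified Lean document; each statement's English description precedes it below -/
import Mathlib

section
/- Let c₁, c₂ ∈ ℝ³ (Euclidean space) and r ≥ 0, and let n ∈ ℕ with n ≥ 3. Set s = ‖c₂ − c₁‖₂ / (2(n−2)). Define n spheres as follows: S̄₁ = B(c₁, r), S̄ₙ = B(c₂, r), and for m = 1,…,n−2, S̄_{m+1} = B( c₁ + ((2m−1)/(2(n−2))) (c₂ − c₁) , √(r² + s²) ). Then the capsule co( B(c₁,r) ∪ B(c₂,r) ) is contained in the union S̄₁ ∪ S̄₂ ∪ ⋯ ∪ S̄ₙ. (This is the equal-radius special case of the Spherical Forward Occupancy theorem: a capsule is covered by n overlapping spheres with equally spaced centers.) -/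
open RealInnerProductSpace

/-- Equal-radius special case of the Spherical Forward Occupancy theorem:
a capsule is covered by n overlapping spheres with equally spaced centers. -/
theorem capsule_subset_union_spheres (c₁ c₂ : EuclideanSpace ℝ (Fin 3))
    (r : ℝ) (hr : 0 ≤ r) (n : ℕ) (hn : 3 ≤ n) (s : ℝ)
    (hs : s = ‖c₂ - c₁‖ / (2 * ((n : ℝ) - 2))) :
    convexHull ℝ (Metric.closedBall c₁ r ∪ Metric.closedBall c₂ r) ⊆
      Metric.closedBall c₁ r ∪ Metric.closedBall c₂ r ∪
        ⋃ m ∈ Finset.Icc 1 (n - 2),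
          Metric.closedBall
            (c₁ + ((2 * (m : ℝ) - 1) / (2 * ((n : ℝ) - 2))) • (c₂ - c₁))
            (Real.sqrt (r ^ 2 + s ^ 2)) := by
  intro x hx
  rcases eq_or_ne c₂ c₁ with hc | hc
  · subst hc
    rw [Set.union_self, (convex_closedBall _ _).convexHull_eq] at hx
    exact Or.inl (Or.inl hx)
  have hd : (0:ℝ) < ‖c₂ - c₁‖ := by
    rw [norm_pos_iff, sub_ne_zero]; exact hc
  set v : EuclideanSpace ℝ (Fin 3) := c₂ - c₁ with hv
  set d : ℝ := ‖v‖ with hdd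
  -- extract a convex combination
  rw [Convex.convexHull_union (convex_closedBall _ _) (convex_closedBall _ _)
      (Metric.nonempty_closedBall.2 hr) (Metric.nonempty_closedBall.2 hr),
    mem_convexJoin] at hx
  obtain ⟨p, hp, q, hq, a, b, ha, hb, hab, hxe⟩ := hx
  rw [Metric.mem_closedBall, dist_eq_norm] at hp hq
  -- distance from x to the segment point c₁ + b • v is ≤ r
  have hseg : ‖x - (c₁ + b • v)‖ ≤ r := by
    have hxx : x - (c₁ + b • v) = a • (p - c₁) + b • (q - c₂) := by
      rw [← hxe]
      have : a = 1 - b := by linarith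
      rw [this, hv]
      module
    calc ‖x - (c₁ + b • v)‖ ≤ a * ‖p - c₁‖ + b * ‖q - c₂‖ := by
          rw [hxx]
          refine (norm_add_le _ _).trans ?_
          rw [norm_smul, norm_smul, Real.norm_of_nonneg ha, Real.norm_of_nonneg hb]
      _ ≤ a * r + b * r := by
          gcongr
      _ = r := by rw [← add_mul, hab, one_mul]
  -- orthogonal decomposition
  set α : ℝ := ⟪v, x - c₁⟫ / d ^ 2 with hα
  set w : EuclideanSpace ℝ (Fin 3) := x - c₁ - α • v with hw
  have hvw : ⟪v, w⟫ = 0 := by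
    rw [hw, inner_sub_right, inner_smul_right, real_inner_self_eq_norm_sq, ← hdd, hα]
    field_simp
    ring
  have key : ∀ β : ℝ, ‖x - (c₁ + β • v)‖ ^ 2 = (α - β) ^ 2 * d ^ 2 + ‖w‖ ^ 2 := by
    intro β
    have hx2 : x - (c₁ + β • v) = (α - β) • v + w := by rw [hw]; module
    rw [hx2, norm_add_sq_real, inner_smul_left, RCLike.conj_to_real, hvw, norm_smul,
      Real.norm_eq_abs, mul_pow, sq_abs]
    ring
  have hb1 : b ≤ 1 := by linarith
  have hkey : (α - b) ^ 2 * d ^ 2 + ‖w‖ ^ 2 ≤ r ^ 2 := by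
    rw [← key b]
    exact pow_le_pow_left₀ (norm_nonneg _) hseg 2
  have hd2 : (0:ℝ) < d ^ 2 := by positivity
  rcases le_or_gt α 0 with hα0 | hα0
  · -- x ∈ closedBall c₁ r
    left; left
    rw [Metric.mem_closedBall, dist_eq_norm]
    have h0 : ‖x - c₁‖ ^ 2 = α ^ 2 * d ^ 2 + ‖w‖ ^ 2 := by
      have := key 0
      simpa using this
    have hsq : ‖x - c₁‖ ^ 2 ≤ r ^ 2 := by
      have h1 : α ^ 2 ≤ (α - b) ^ 2 := by
        rw [show (α - b) ^ 2 = (b - α) ^ 2 by ring]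
        exact sq_le_sq' (by linarith) (by linarith)
      have h2 := mul_le_mul_of_nonneg_right h1 hd2.le
      rw [h0]
      linarith
    have := Real.sqrt_le_sqrt hsq
    rwa [Real.sqrt_sq (norm_nonneg _), Real.sqrt_sq hr] at this
  rcases le_or_gt 1 α with hα1 | hα1
  · -- x ∈ closedBall c₂ r
    left; right
    rw [Metric.mem_closedBall, dist_eq_norm]
    have h0 : ‖x - c₂‖ ^ 2 = (α - 1) ^ 2 * d ^ 2 + ‖w‖ ^ 2 := by
      have := key 1
      have he : c₁ + (1:ℝ) • v = c₂ := by rw [hv]; module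
      rwa [he] at this
    have hsq : ‖x - c₂‖ ^ 2 ≤ r ^ 2 := by
      have h1 : (α - 1) ^ 2 ≤ (α - b) ^ 2 := by
        exact sq_le_sq' (by linarith) (by linarith)
      have h2 := mul_le_mul_of_nonneg_right h1 hd2.le
      rw [h0]
      linarith
    have := Real.sqrt_le_sqrt hsq
    rwa [Real.sqrt_sq (norm_nonneg _), Real.sqrt_sq hr] at this
  -- middle case
  right
  set N : ℕ := n - 2 with hNdef
  have hN1 : 1 ≤ N := by omega
  have hNcast : ((n:ℝ) - 2) = (N : ℝ) := by
    rw [hNdef]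
    push_cast [Nat.cast_sub (by omega : 2 ≤ n)]
    ring
  have hNpos : (0:ℝ) < (N : ℝ) := by exact_mod_cast hN1
  set m : ℕ := ⌈α * N⌉₊ with hm
  have hm1 : 1 ≤ m := by
    rw [hm]
    exact Nat.one_le_iff_ne_zero.2 (by
      simp only [ne_eq, Nat.ceil_eq_zero, not_le]
      positivity)
  have hmN : m ≤ N := by
    rw [hm]
    refine Nat.ceil_le.2 ?_
    have := mul_le_mul_of_nonneg_right hα1.le hNpos.le
    linarith
  have hmle : α * N ≤ (m : ℝ) := Nat.le_ceil _
  have hmlt : (m : ℝ) - 1 < α * N := by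
    have : (m - 1 : ℕ) < ⌈α * N⌉₊ := by omega
    have := Nat.lt_ceil.1 this
    rwa [Nat.cast_sub hm1, Nat.cast_one] at this
  simp only [Set.mem_iUnion]
  refine ⟨m, ?_, ?_⟩
  · simp only [Finset.mem_Icc]
    exact ⟨hm1, by omega⟩
  rw [Metric.mem_closedBall, dist_eq_norm, hNcast]
  have hβ : ‖x - (c₁ + ((2 * (m:ℝ) - 1) / (2 * (N:ℝ))) • v)‖ ^ 2
      = (α - (2 * (m:ℝ) - 1) / (2 * (N:ℝ))) ^ 2 * d ^ 2 + ‖w‖ ^ 2 := key _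
  have hfrac : (α - (2 * (m:ℝ) - 1) / (2 * (N:ℝ))) ^ 2 ≤ (1 / (2 * (N:ℝ))) ^ 2 := by
    have heq : α - (2 * (m:ℝ) - 1) / (2 * (N:ℝ))
        = (2 * α * N - (2 * m - 1)) / (2 * (N:ℝ)) := by
      field_simp
    rw [heq, div_pow, div_pow]
    have h3 : (2 * α * (N:ℝ) - (2 * (m:ℝ) - 1)) ^ 2 ≤ 1 ^ 2 :=
      sq_le_sq' (by linarith) (by linarith)
    exact (div_le_div_iff_of_pos_right (by positivity)).2 h3
  have hwr : ‖w‖ ^ 2 ≤ r ^ 2 := by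
    have := mul_nonneg (sq_nonneg (α - b)) hd2.le
    linarith
  have hs2 : s ^ 2 = (1 / (2 * (N:ℝ))) ^ 2 * d ^ 2 := by
    rw [hs, hNcast]
    field_simp
  have hsq : ‖x - (c₁ + ((2 * (m:ℝ) - 1) / (2 * (N:ℝ))) • v)‖ ^ 2 ≤ r ^ 2 + s ^ 2 := by
    rw [hβ, hs2]
    have := mul_le_mul_of_nonneg_right hfrac hd2.le
    linarith
  calc ‖x - (c₁ + ((2 * (m:ℝ) - 1) / (2 * (N:ℝ))) • v)‖
      = Real.sqrt (‖x - (c₁ + ((2 * (m:ℝ) - 1) / (2 * (N:ℝ))) • v)‖ ^ 2) := by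
        rw [Real.sqrt_sq (norm_nonneg _)]
    _ ≤ Real.sqrt (r ^ 2 + s ^ 2) := Real.sqrt_le_sqrt hsq
end

section
/- Let c₁, c₂ ∈ ℝ³ (Euclidean space), let r₁, r₂ ≥ 0 with ‖c₂ − c₁‖₂ ≥ |r₂ − r₁|, and let n_s ∈ ℕ with n_s ≥ 3. Set s = ‖c₂ − c₁‖₂ / (2(n_s−2)). Define n_s spheres as follows: S̄₁ = B(c₁, r₁); S̄_{n_s} = B(c₂, r₂); and for each m = 1,…,n_s−2, with λ_m = (2m−1)/(2(n_s−2)), center c̄_{m+1} = c₁ + λ_m (c₂ − c₁), perpendicular length ℓ_{m+1} = r₁ + λ_m (r₂ − r₁), and radius r̄_{m+1} = ( ℓ_{m+1}² + s² − ((r₂ − r₁)/(2(n_s−2)))² )^{1/2}, let S̄_{m+1} = B(c̄_{m+1}, r̄_{m+1}). Then the tapered capsule co( B(c₁,r₁) ∪ B(c₂,r₂) ) is contained in the union S̄₁ ∪ S̄₂ ∪ ⋯ ∪ S̄_{n_s}. (This is Theorem 1, the Spherical Forward Occupancy: the tapered capsule overapproximating a robot link is covered by n_s spheres.) -/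
set_option maxHeartbeats 1000000

/-- Quadratic minimum bound: if a convex quadratic is nonpositive at some point,
then at any point within `h` of the vertex its value is at most `A * h ^ 2`. -/
lemma sfo_quad_bound {A B C t₀ l h : ℝ} (hA : 0 < A)
    (h0 : A * t₀ ^ 2 + B * t₀ + C ≤ 0)
    (hl : (l + B / (2 * A)) ^ 2 ≤ h ^ 2) :
    A * l ^ 2 + B * l + C ≤ A * h ^ 2 := by
  have key : ∀ t : ℝ, A * t ^ 2 + B * t + C
      = A * (t + B / (2 * A)) ^ 2 + (C - B ^ 2 / (4 * A)) := by
    intro t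
    field_simp
    ring
  have h1 := key t₀
  have h2 := key l
  nlinarith [sq_nonneg (t₀ + B / (2 * A)),
    mul_le_mul_of_nonneg_left hl hA.le,
    mul_nonneg hA.le (sq_nonneg (t₀ + B / (2 * A)))]

/-- Theorem 1 (Spherical Forward Occupancy): the tapered capsule
co(B(c₁,r₁) ∪ B(c₂,r₂)) is covered by n_s spheres: the two end spheres
together with n_s − 2 intermediate spheres with equally spaced centers
c̄_{m+1} = c₁ + λ_m (c₂ − c₁), λ_m = (2m−1)/(2(n_s−2)), and radii
r̄_{m+1} = √(ℓ_{m+1}² + s² − ((r₂−r₁)/(2(n_s−2)))²) where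
ℓ_{m+1} = r₁ + λ_m (r₂ − r₁) and s = ‖c₂ − c₁‖/(2(n_s−2)). -/
theorem tapered_capsule_subset_sfo (c₁ c₂ : EuclideanSpace ℝ (Fin 3))
    (r₁ r₂ : ℝ) (hr₁ : 0 ≤ r₁) (hr₂ : 0 ≤ r₂)
    (hsep : |r₂ - r₁| ≤ ‖c₂ - c₁‖) (ns : ℕ) (hns : 3 ≤ ns) (s : ℝ)
    (hs : s = ‖c₂ - c₁‖ / (2 * ((ns : ℝ) - 2))) :
    convexHull ℝ (Metric.closedBall c₁ r₁ ∪ Metric.closedBall c₂ r₂) ⊆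
      Metric.closedBall c₁ r₁ ∪ Metric.closedBall c₂ r₂ ∪
        ⋃ m ∈ Finset.Icc 1 (ns - 2),
          Metric.closedBall
            (c₁ + ((2 * (m : ℝ) - 1) / (2 * ((ns : ℝ) - 2))) • (c₂ - c₁))
            (Real.sqrt ((r₁ + ((2 * (m : ℝ) - 1) / (2 * ((ns : ℝ) - 2))) * (r₂ - r₁)) ^ 2
              + s ^ 2 - ((r₂ - r₁) / (2 * ((ns : ℝ) - 2))) ^ 2)) := by
  intro x hx
  rw [convexHull_union (Metric.nonempty_closedBall.mpr hr₁)
      (Metric.nonempty_closedBall.mpr hr₂),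
    (convex_closedBall c₁ r₁).convexHull_eq,
    (convex_closedBall c₂ r₂).convexHull_eq, mem_convexJoin] at hx
  obtain ⟨a, ha, b, hb, p, q, hp, hq, hpq, hxe⟩ := hx
  rw [Metric.mem_closedBall, dist_eq_norm] at ha hb
  have hp1 : p = 1 - q := by linarith
  subst hp1
  have hq1 : q ≤ 1 := by linarith
  -- abbreviations for the quadratic coefficients
  set A : ℝ := ‖c₂ - c₁‖ ^ 2 - (r₂ - r₁) ^ 2 with hA_def
  set B : ℝ := -2 * (inner ℝ (x - c₁) (c₂ - c₁) : ℝ) - 2 * r₁ * (r₂ - r₁) with hB_def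
  set C : ℝ := ‖x - c₁‖ ^ 2 - r₁ ^ 2 with hC_def
  have hA0 : 0 ≤ A := by
    have h1 : (r₂ - r₁) ^ 2 ≤ ‖c₂ - c₁‖ ^ 2 := by
      have := abs_nonneg (r₂ - r₁)
      nlinarith [sq_abs (r₂ - r₁)]
    simp only [hA_def]
    linarith
  -- the fundamental expansion of the squared distance from a point on the axis
  have expand : ∀ t : ℝ, ‖x - (c₁ + t • (c₂ - c₁))‖ ^ 2
      = A * t ^ 2 + B * t + C + (r₁ + t * (r₂ - r₁)) ^ 2 := by
    intro t
    have h1 : x - (c₁ + t • (c₂ - c₁)) = (x - c₁) - t • (c₂ - c₁) := by abel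
    rw [h1, norm_sub_sq_real, real_inner_smul_right, norm_smul, Real.norm_eq_abs,
      mul_pow, sq_abs, hA_def, hB_def, hC_def]
    ring
  -- the point x lies in the ball of the moving center at parameter q
  have hxc : x - (c₁ + q • (c₂ - c₁)) = (1 - q) • (a - c₁) + q • (b - c₂) := by
    rw [← hxe]
    module
  have htri : ‖x - (c₁ + q • (c₂ - c₁))‖ ≤ r₁ + q * (r₂ - r₁) := by
    rw [hxc]
    calc ‖(1 - q) • (a - c₁) + q • (b - c₂)‖
        ≤ ‖(1 - q) • (a - c₁)‖ + ‖q • (b - c₂)‖ := norm_add_le _ _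
      _ = (1 - q) * ‖a - c₁‖ + q * ‖b - c₂‖ := by
          rw [norm_smul, norm_smul, Real.norm_eq_abs, Real.norm_eq_abs,
            abs_of_nonneg (by linarith), abs_of_nonneg hq]
      _ ≤ (1 - q) * r₁ + q * r₂ := by
          apply add_le_add
          · exact mul_le_mul_of_nonneg_left ha (by linarith)
          · exact mul_le_mul_of_nonneg_left hb hq
      _ = r₁ + q * (r₂ - r₁) := by ring
  have hRq : 0 ≤ r₁ + q * (r₂ - r₁) := by nlinarith
  have h0 : A * q ^ 2 + B * q + C ≤ 0 := by
    have hsq : ‖x - (c₁ + q • (c₂ - c₁))‖ ^ 2 ≤ (r₁ + q * (r₂ - r₁)) ^ 2 := by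
      nlinarith [norm_nonneg (x - (c₁ + q • (c₂ - c₁)))]
    have := expand q
    linarith
  by_cases hB0 : 0 ≤ B
  · -- x is in the first ball
    left; left
    rw [Metric.mem_closedBall, dist_eq_norm]
    have hC0 : C ≤ 0 := by nlinarith [mul_nonneg (mul_nonneg hA0 hq) hq, mul_nonneg hB0 hq]
    have : ‖x - c₁‖ ^ 2 ≤ r₁ ^ 2 := by rw [hC_def] at hC0; linarith
    nlinarith [norm_nonneg (x - c₁)]
  push_neg at hB0
  by_cases h2AB : 2 * A + B ≤ 0
  · -- x is in the second ball
    left; right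
    rw [Metric.mem_closedBall, dist_eq_norm]
    have hg1 : A * 1 ^ 2 + B * 1 + C ≤ 0 := by
      nlinarith [mul_nonneg (by linarith : (0:ℝ) ≤ 1 - q)
        (by nlinarith : (0:ℝ) ≤ -(A * (q + 1) + B))]
    have hx2 : ‖x - (c₁ + (1:ℝ) • (c₂ - c₁))‖ ^ 2 ≤ r₂ ^ 2 := by
      have := expand 1
      nlinarith
    have hcc : c₁ + (1:ℝ) • (c₂ - c₁) = c₂ := by
      rw [one_smul]; abel
    rw [hcc] at hx2
    nlinarith [norm_nonneg (x - c₂)]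
  push_neg at h2AB
  -- intermediate case: the vertex t* = -B/(2A) lies in (0,1)
  right
  have hApos : 0 < A := by linarith
  have hts0 : 0 < -B / (2 * A) := div_pos (by linarith) (by linarith)
  have hts1 : -B / (2 * A) < 1 := by
    rw [div_lt_one (by linarith)]; linarith
  set ts : ℝ := -B / (2 * A) with hts_def
  have hNr : (1:ℝ) ≤ (ns:ℝ) - 2 := by
    have : (3:ℝ) ≤ (ns:ℝ) := by exact_mod_cast hns
    linarith
  set Nr : ℝ := (ns:ℝ) - 2 with hNr_def
  have hNrpos : 0 < Nr := by linarith
  set m : ℕ := ⌈ts * Nr⌉₊ with hm_def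
  have hm1 : 1 ≤ m := Nat.ceil_pos.mpr (mul_pos hts0 hNrpos)
  have hmN : m ≤ ns - 2 := by
    have : ts * Nr ≤ ((ns - 2 : ℕ) : ℝ) := by
      have hcast : ((ns - 2 : ℕ) : ℝ) = Nr := by
        rw [hNr_def]
        push_cast [Nat.cast_sub (by omega : 2 ≤ ns)]
        ring
      rw [hcast]
      nlinarith
    exact Nat.ceil_le.mpr this
  have hmlow : (m : ℝ) - 1 < ts * Nr := by
    have := Nat.ceil_lt_add_one (by positivity : (0:ℝ) ≤ ts * Nr)
    rw [← hm_def] at this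
    linarith
  have hmhigh : ts * Nr ≤ (m : ℝ) := by
    have := Nat.le_ceil (ts * Nr)
    rw [← hm_def] at this
    exact this
  set lam : ℝ := (2 * (m : ℝ) - 1) / (2 * Nr) with hlam_def
  have hvert : (lam + B / (2 * A)) ^ 2 ≤ (1 / (2 * Nr)) ^ 2 := by
    have heq : lam + B / (2 * A) = lam - ts := by rw [hts_def]; ring
    rw [heq]
    have hlt : lam - ts = (2 * (m:ℝ) - 1 - 2 * Nr * ts) / (2 * Nr) := by
      rw [hlam_def]; field_simp
    have hd1 : lam - ts ≤ 1 / (2 * Nr) := by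
      rw [hlt, div_le_div_iff₀ (by positivity) (by positivity)]
      nlinarith
    have hd2 : -(1 / (2 * Nr)) ≤ lam - ts := by
      rw [hlt, show -(1 / (2 * Nr)) = (-1) / (2 * Nr) by ring,
        div_le_div_iff₀ (by positivity) (by positivity)]
      nlinarith
    exact sq_le_sq' hd2 hd1
  have hquad : A * lam ^ 2 + B * lam + C ≤ A * (1 / (2 * Nr)) ^ 2 :=
    sfo_quad_bound hApos h0 hvert
  -- membership in the m-th intermediate ball
  refine Set.mem_biUnion (show m ∈ (Finset.Icc 1 (ns - 2) : Finset ℕ) from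
    Finset.mem_Icc.mpr ⟨hm1, hmN⟩) ?_
  rw [Metric.mem_closedBall, dist_eq_norm]
  have hlameq : (2 * (m : ℝ) - 1) / (2 * ((ns:ℝ) - 2)) = lam := by
    rw [hlam_def, hNr_def]
  rw [hlameq]
  clear_value A B C ts Nr m lam
  have hsq : ‖x - (c₁ + lam • (c₂ - c₁))‖ ^ 2
      ≤ (r₁ + lam * (r₂ - r₁)) ^ 2 + s ^ 2 - ((r₂ - r₁) / (2 * ((ns:ℝ) - 2))) ^ 2 := by
    have he := expand lam
    have hsd : s ^ 2 - ((r₂ - r₁) / (2 * ((ns:ℝ) - 2))) ^ 2 = A * (1 / (2 * Nr)) ^ 2 := by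
      rw [hs, hA_def, hNr_def]
      field_simp
    linarith
  have hrad : (0:ℝ) ≤ (r₁ + lam * (r₂ - r₁)) ^ 2
      + s ^ 2 - ((r₂ - r₁) / (2 * ((ns:ℝ) - 2))) ^ 2 := by
    have := sq_nonneg ‖x - (c₁ + lam • (c₂ - c₁))‖
    linarith
  rw [hNr_def]
  rw [Real.le_sqrt (norm_nonneg _) hrad]
  exact hsq
end
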